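/- Consider the unconstrained two-environment linear regression game U-LRG on ℝⁿ. If the least squares optimal solutions of the two environments differ, i.e. w₁* ≠ w₂*, then U-LRG has no pure Nash equilibrium. -/

import Mathlib

open Matrix

/-- Risk of an environment with second-moment matrix `S` and cross-moment vector `ρ`
at the joint action `(w₁, w₂)`:  `(w₁+w₂)ᵀ S (w₁+w₂) − 2 ρᵀ (w₁+w₂)`. -/
noncomputable def risk {n : ℕ} (S : Matrix (Fin n) (Fin n) ℝ) (ρ : Fin n → ℝ)
    (w₁ w₂ : Fin n → ℝ) : ℝ :=
  (w₁ + w₂) ⬝ᵥ (S *ᵥ (w₁ + w₂)) - 2 * (ρ ⬝ᵥ (w₁ + w₂))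

private lemma dot_symm {n : ℕ} {S : Matrix (Fin n) (Fin n) ℝ} (hS : S.IsHermitian)
    (x y : Fin n → ℝ) : x ⬝ᵥ (S *ᵥ y) = y ⬝ᵥ (S *ᵥ x) := by
  rw [dotProduct_mulVec, ← mulVec_transpose]
  have : Sᵀ = S := by rw [← conjTranspose_eq_transpose_of_trivial]; exact hS
  rw [this, dotProduct_comm]

private lemma quad_min_eq {n : ℕ} (S : Matrix (Fin n) (Fin n) ℝ) (hS : S.PosDef)
    (ρ x : Fin n → ℝ)
    (h : ∀ y : Fin n → ℝ,
      x ⬝ᵥ (S *ᵥ x) - 2 * (ρ ⬝ᵥ x) ≤ y ⬝ᵥ (S *ᵥ y) - 2 * (ρ ⬝ᵥ y)) :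
    x = S⁻¹ *ᵥ ρ := by
  set z : Fin n → ℝ := S⁻¹ *ᵥ ρ with hz
  have hSz : S *ᵥ z = ρ := by
    rw [hz, mulVec_mulVec, Matrix.mul_nonsing_inv _ (isUnit_iff_ne_zero.mpr hS.det_pos.ne'),
      one_mulVec]
  have hmain := h z
  -- f(x) - f(z) = (x - z) ⬝ᵥ S *ᵥ (x - z)
  have hdiff : (x - z) ⬝ᵥ (S *ᵥ (x - z)) =
      (x ⬝ᵥ (S *ᵥ x) - 2 * (ρ ⬝ᵥ x)) - (z ⬝ᵥ (S *ᵥ z) - 2 * (ρ ⬝ᵥ z)) := by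
    have h1 : z ⬝ᵥ (S *ᵥ x) = x ⬝ᵥ (S *ᵥ z) := dot_symm hS.1 z x
    have h2 : x ⬝ᵥ (S *ᵥ z) = ρ ⬝ᵥ x := by rw [hSz, dotProduct_comm]
    have h3 : z ⬝ᵥ (S *ᵥ z) = ρ ⬝ᵥ z := by rw [hSz, dotProduct_comm]
    simp only [sub_dotProduct, dotProduct_sub, mulVec_sub, h1, h2, h3]
    ring
  by_contra hxz
  have hne : x - z ≠ 0 := sub_ne_zero.mpr hxz
  have hpos : 0 < (x - z) ⬝ᵥ (S *ᵥ (x - z)) := by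
    have := hS.dotProduct_mulVec_pos hne
    simpa using this
  rw [hdiff] at hpos
  linarith

/-- In the unconstrained two-environment linear regression game U-LRG,
if the least squares optimal solutions differ (`w₁* ≠ w₂*`), then there is no
pure Nash equilibrium. -/
theorem ulrg_no_nash_of_ls_ne {n : ℕ}
    (S₁ S₂ : Matrix (Fin n) (Fin n) ℝ) (hS₁ : S₁.PosDef) (hS₂ : S₂.PosDef)
    (ρ₁ ρ₂ : Fin n → ℝ)
    (hne : S₁⁻¹ *ᵥ ρ₁ ≠ S₂⁻¹ *ᵥ ρ₂) :
    ¬ ∃ w₁ w₂ : Fin n → ℝ,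
        (∀ u : Fin n → ℝ, risk S₁ ρ₁ w₁ w₂ ≤ risk S₁ ρ₁ u w₂) ∧
        (∀ v : Fin n → ℝ, risk S₂ ρ₂ w₁ w₂ ≤ risk S₂ ρ₂ w₁ v) := by
  rintro ⟨w₁, w₂, h1, h2⟩
  have e1 : w₁ + w₂ = S₁⁻¹ *ᵥ ρ₁ := by
    apply quad_min_eq S₁ hS₁ ρ₁ (w₁ + w₂)
    intro y
    have := h1 (y - w₂)
    simpa [risk, sub_add_cancel] using this
  have e2 : w₁ + w₂ = S₂⁻¹ *ᵥ ρ₂ := by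
    apply quad_min_eq S₂ hS₂ ρ₂ (w₁ + w₂)
    intro y
    have := h2 (y - w₁)
    simpa [risk, add_sub_cancel] using this
  exact hne (e1 ▸ e2)
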